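/- Let p be a prime, α ∈ ℤ/pℤ \ {0,1}, G a group, X a conjugacy class of G generating G, and φ : ℤ/pℤ → X a bijection satisfying φ(i)φ(j)φ(i)⁻¹ = φ((1−α)i + αj) for all i, j ∈ ℤ/pℤ. Set g₀ = φ(0) and γ = φ(0)φ(1)⁻¹. Let k be a field of characteristic p, let J ⊆ kG be the two-sided ideal generated by γ − 1, let V be a Yetter–Drinfeld module over kG generated as a kG-module by a vector v₀ ∈ V_{g₀}, and let δ : V → kG ⊗ V be the k-linear coaction determined by δ(v) = x ⊗ v for v ∈ V_x. Denote by ᾱ ∈ k the image of α under ℤ/pℤ → k. Then for all 0 ≤ j ≤ p − 1, δ((γ − 1)^j v₀) − Σ_{i=0}^{j} C(j,i) (1 − ᾱ)^i (γ − 1)^i g₀ ⊗ (γ − 1)^{j−i} v₀ lies in Σ_{k+l ≥ j+1} J^k ⊗ (J^l V), where C(j,i) denotes the ordinary binomial coefficient. -/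

import Mathlib

open TensorProduct

/-- The image `P ⊗ Q` of a tensor product of two submodules inside `M ⊗[k] N`. -/
noncomputable def subTensor13 {k : Type*} [CommSemiring k] {M N : Type*}
    [AddCommMonoid M] [Module k M] [AddCommMonoid N] [Module k N]
    (P : Submodule k M) (Q : Submodule k N) : Submodule k (M ⊗[k] N) :=
  LinearMap.range (TensorProduct.map P.subtype Q.subtype)

/-- The subspace `N V` of a module `V` spanned by products `a • v` with `a` in a subspace `N`
of the acting algebra. -/
def subSMul13 {k : Type*} [CommSemiring k] {A : Type*} [Semiring A] [Algebra k A]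
    {V : Type*} [AddCommMonoid V] [Module k V] [Module A V] [IsScalarTower k A V]
    (N : Submodule k A) : Submodule k V :=
  Submodule.span k {w : V | ∃ a ∈ N, ∃ v : V, w = a • v}


/-- Powers of an ideal, with the convention that the zeroth power is the whole algebra. -/
def idealPow13 {k : Type*} [CommSemiring k] {A : Type*} [Semiring A] [Algebra k A]
    (J : Submodule k A) : ℕ → Submodule k A
  | 0 => ⊤
  | m + 1 => J ^ (m + 1)

section Aux13
variable {k : Type*} [CommRing k] {A : Type*} [Ring A] [Algebra k A]
variable {V : Type*} [AddCommGroup V] [Module k V] [Module A V] [IsScalarTower k A V]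

theorem aux13_smul_comm (t : k) (a : A) (v : V) : a • (t • v) = t • (a • v) := by
  calc a • (t • v) = a • ((t • (1:A)) • v) := by rw [smul_assoc, one_smul]
    _ = (a * (t • (1:A))) • v := (mul_smul _ _ _).symm
    _ = (t • (a * 1)) • v := by rw [mul_smul_comm]
    _ = t • (a • v) := by rw [mul_one, smul_assoc]

/-- The action of `a : A` on `V` as a `k`-linear map. -/
def actL13 (a : A) : V →ₗ[k] V where
  toFun v := a • v
  map_add' := smul_add a
  map_smul' t v := aux13_smul_comm t a v

@[simp] theorem actL13_apply (a : A) (v : V) : actL13 (k := k) a v = a • v := rfl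

theorem idealPow13_zero (J : Submodule k A) : idealPow13 J 0 = ⊤ := rfl
theorem idealPow13_succ (J : Submodule k A) (m : ℕ) : idealPow13 J (m+1) = J ^ (m+1) := rfl

theorem mem_subSMul13 {N : Submodule k A} {a : A} (ha : a ∈ N) (v : V) :
    a • v ∈ subSMul13 (V := V) N :=
  Submodule.subset_span ⟨a, ha, v, rfl⟩

theorem subSMul13_smul_mem {N N' : Submodule k A} (b : A) (h : ∀ a ∈ N, b * a ∈ N')
    {w : V} (hw : w ∈ subSMul13 (V := V) N) : b • w ∈ subSMul13 (V := V) N' := by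
  induction hw using Submodule.span_induction with
  | mem x hx =>
    obtain ⟨a, ha, v, rfl⟩ := hx
    rw [← mul_smul]
    exact mem_subSMul13 (h a ha) v
  | zero => simpa using Submodule.zero_mem _
  | add x y hx hy ihx ihy => rw [smul_add]; exact Submodule.add_mem _ ihx ihy
  | smul t x hx ih => rw [aux13_smul_comm]; exact Submodule.smul_mem _ t ih

variable {J : Submodule k A} (hJ : ∀ x ∈ J, ∀ a : A, a * x ∈ J ∧ x * a ∈ J)
include hJ

theorem aux13_pow_ideal : ∀ n, ∀ x ∈ idealPow13 J n, ∀ a : A,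
    a * x ∈ idealPow13 J n ∧ x * a ∈ idealPow13 J n := by
  intro n
  match n with
  | 0 => intro x _ a; exact ⟨Submodule.mem_top, Submodule.mem_top⟩
  | n + 1 =>
    rw [idealPow13_succ]
    induction n with
    | zero => simpa [pow_one] using hJ
    | succ m ih =>
      intro x hx a
      rw [pow_succ] at hx ⊢
      refine Submodule.mul_induction_on hx ?_ ?_
      · intro y hy z hz
        constructor
        · rw [← mul_assoc]
          exact Submodule.mul_mem_mul ((ih _ (by simpa [idealPow13_succ] using hy) a).1) hz
        · rw [mul_assoc]
          exact Submodule.mul_mem_mul hy ((hJ _ hz a).2)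
      · intro y z hy hz
        exact ⟨by rw [mul_add]; exact Submodule.add_mem _ hy.1 hz.1,
               by rw [add_mul]; exact Submodule.add_mem _ hy.2 hz.2⟩

theorem aux13_mul_raise {c : A} (hc : c ∈ J) :
    ∀ n, ∀ x ∈ idealPow13 J n, c * x ∈ idealPow13 J (n+1) := by
  intro n x hx
  match n with
  | 0 => rw [idealPow13_succ, pow_one]; exact (hJ c hc x).2
  | m + 1 =>
    rw [idealPow13_succ, pow_succ']
    exact Submodule.mul_mem_mul hc hx

theorem aux13_pow_mem {c : A} (hc : c ∈ J) : ∀ n, c ^ n ∈ idealPow13 J n := by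
  intro n
  induction n with
  | zero => exact Submodule.mem_top
  | succ m ih => rw [pow_succ']; exact aux13_mul_raise hJ hc m _ ih

theorem aux13_mul_mem : ∀ m n, ∀ x ∈ idealPow13 J m, ∀ y ∈ idealPow13 J n,
    x * y ∈ idealPow13 J (m + n) := by
  intro m n x hx y hy
  match m, n with
  | 0, n => rw [Nat.zero_add]; exact (aux13_pow_ideal hJ n y hy x).1
  | m+1, 0 => exact (aux13_pow_ideal hJ (m+1) x hx y).2
  | m+1, n+1 =>
    rw [idealPow13_succ] at hx hy
    have h : m + 1 + (n + 1) = (m + n + 1) + 1 := by omega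
    rw [h, idealPow13_succ, show (m + n + 1) + 1 = (m+1) + (n+1) by omega, pow_add]
    exact Submodule.mul_mem_mul hx hy

end Aux13

/-- The filtration submodule `Σ_{a+b ≥ n} J^a ⊗ J^b V`. -/
noncomputable def M13 {k : Type*} [CommRing k] {A : Type*} [Ring A] [Algebra k A]
    (J : Submodule k A) (V : Type*) [AddCommGroup V] [Module k V] [Module A V]
    [IsScalarTower k A V] (n : ℕ) : Submodule k (A ⊗[k] V) :=
  ⨆ (kl : ℕ × ℕ) (_ : n ≤ kl.1 + kl.2),
    subTensor13 (idealPow13 J kl.1) (subSMul13 (V := V) (idealPow13 J kl.2))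

section M13
variable {k : Type*} [CommRing k] {A : Type*} [Ring A] [Algebra k A]
variable {V : Type*} [AddCommGroup V] [Module k V] [Module A V] [IsScalarTower k A V]

theorem mem_M13 {J : Submodule k A} {n a b : ℕ} (h : n ≤ a + b) {x : A}
    (hx : x ∈ idealPow13 J a) {w : V} (hw : w ∈ subSMul13 (V := V) (idealPow13 J b)) :
    x ⊗ₜ[k] w ∈ M13 J V n := by
  refine Submodule.mem_iSup_of_mem (a, b) (Submodule.mem_iSup_of_mem h ?_)
  exact ⟨⟨x, hx⟩ ⊗ₜ[k] ⟨w, hw⟩, by rw [TensorProduct.map_tmul]; rfl⟩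

theorem M13_map {J : Submodule k A} (hJ : ∀ x ∈ J, ∀ a : A, a * x ∈ J ∧ x * a ∈ J)
    (u u' : A) (huu' : u * u' = 1) (hu : u - 1 ∈ J)
    (F : A ⊗[k] V →ₗ[k] A ⊗[k] V)
    (hF : ∀ (a : A) (w : V),
      F (a ⊗ₜ[k] w) = ((u * a * u' - a) ⊗ₜ[k] (u • w)) + (a ⊗ₜ[k] ((u - 1) • w)))
    (n : ℕ) {z : A ⊗[k] V} (hz : z ∈ M13 J V n) : F z ∈ M13 J V (n + 1) := by
  have hu1 : u - 1 ∈ idealPow13 J 1 := by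
    rw [idealPow13_succ, pow_one]; exact hu
  refine Submodule.iSup_induction
    (motive := fun z => F z ∈ M13 J V (n + 1)) _ hz ?_ ?_ ?_
  · intro kl z hzz
    by_cases hcond : n ≤ kl.1 + kl.2
    · rw [iSup_pos hcond] at hzz
      obtain ⟨t, rfl⟩ := hzz
      induction t using TensorProduct.induction_on with
      | zero => rw [map_zero, map_zero]; exact Submodule.zero_mem _
      | tmul x y =>
        have hxy : (TensorProduct.map (idealPow13 J kl.1).subtype
            (subSMul13 (V := V) (idealPow13 J kl.2)).subtype) (x ⊗ₜ[k] y)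
            = (x : A) ⊗ₜ[k] (y : V) := by rw [TensorProduct.map_tmul]; rfl
        rw [hxy, hF]
        refine Submodule.add_mem _ ?_ ?_
        · -- first summand
          have key : u * (x : A) * u' - (x : A) = ((u-1) * x - (x : A) * (u-1)) * u' := by
            have h2 : (x:A) * (u * u') = (x:A) := by rw [huu', mul_one]
            calc u * (x:A) * u' - (x:A) = u * (x:A) * u' - (x:A) * (u * u') := by rw [h2]
              _ = ((u-1) * (x:A) - (x:A) * (u-1)) * u' := by noncomm_ring
          rw [key]
          refine mem_M13 (a := kl.1 + 1) (b := kl.2) (by omega) ?_ ?_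
          · exact (aux13_pow_ideal hJ (kl.1+1) _
              (Submodule.sub_mem _ (aux13_mul_raise hJ hu kl.1 _ x.2)
                (by
                  have := aux13_mul_mem hJ kl.1 1 _ x.2 _ hu1
                  exact this)) u').2
          · exact subSMul13_smul_mem u (fun a ha => (aux13_pow_ideal hJ kl.2 a ha u).1) y.2
        · refine mem_M13 (a := kl.1) (b := kl.2 + 1) (by omega) x.2 ?_
          exact subSMul13_smul_mem (u - 1) (fun a ha => aux13_mul_raise hJ hu kl.2 a ha) y.2
      | add s t hs ht =>
        rw [map_add, map_add]
        exact Submodule.add_mem _ hs ht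
    · rw [iSup_neg hcond] at hzz
      have : z = 0 := by simpa using hzz
      rw [this, map_zero]; exact Submodule.zero_mem _
  · show F 0 ∈ M13 J V (n + 1)
    rw [map_zero]; exact Submodule.zero_mem _
  · intro x y hx hy
    show F (x + y) ∈ M13 J V (n + 1)
    rw [map_add]; exact Submodule.add_mem _ hx hy

end M13

set_option maxHeartbeats 3000000 in
/-- In the situation of Statement 12, let `V` be a Yetter–Drinfeld module over
`kG` generated as a `kG`-module by `v₀ ∈ V_{g₀}`, with coaction `δ(v) = x ⊗ v` for `v ∈ V_x`.
Then for `0 ≤ j ≤ p − 1`,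
`δ((γ−1)^j v₀) − Σ_{i=0}^{j} C(j,i) (1−ᾱ)^i (γ−1)^i g₀ ⊗ (γ−1)^{j−i} v₀`
lies in `Σ_{k+l ≥ j+1} J^k ⊗ (J^l V)`. -/
theorem stmt13 {k : Type*} [Field k] {G : Type*} [Group G] [DecidableEq G]
    (p : ℕ) (hp : p.Prime) [CharP k p]
    (α : ZMod p) (hα0 : α ≠ 0) (hα1 : α ≠ 1)
    (φ : ZMod p → G) (hφinj : Function.Injective φ)
    (hXconj : ∃ x : G, Set.range φ = {y | IsConj x y})
    (hXgen : Subgroup.closure (Set.range φ) = ⊤)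
    (hrack : ∀ i j : ZMod p, φ i * φ j * (φ i)⁻¹ = φ ((1 - α) * i + α * j))
    -- J is the two-sided ideal of kG generated by γ - 1
    (J : Submodule k (MonoidAlgebra k G))
    (hJmem : MonoidAlgebra.of k G (φ 0 * (φ 1)⁻¹) - 1 ∈ J)
    (hJ2 : ∀ x ∈ J, ∀ a : MonoidAlgebra k G, a * x ∈ J ∧ x * a ∈ J)
    (hJmin : ∀ I : Submodule k (MonoidAlgebra k G),
      MonoidAlgebra.of k G (φ 0 * (φ 1)⁻¹) - 1 ∈ I →
      (∀ x ∈ I, ∀ a : MonoidAlgebra k G, a * x ∈ I ∧ x * a ∈ I) → J ≤ I)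
    -- V is a Yetter--Drinfeld module over kG, generated as a kG-module by v₀ ∈ V_{g₀}
    {V : Type*} [AddCommGroup V] [Module k V] [Module (MonoidAlgebra k G) V]
    [IsScalarTower k (MonoidAlgebra k G) V]
    (Vx : G → Submodule k V)
    (hgrad : DirectSum.IsInternal Vx)
    (hcompat : ∀ g x : G, ∀ v ∈ Vx x, MonoidAlgebra.of k G g • v ∈ Vx (g * x * g⁻¹))
    (v₀ : V) (hv₀ : v₀ ∈ Vx (φ 0))
    (hcyc : Submodule.span (MonoidAlgebra k G) {v₀} = ⊤)
    -- the coaction δ, determined by δ(v) = x ⊗ v for v ∈ V_x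
    (δ : V →ₗ[k] MonoidAlgebra k G ⊗[k] V)
    (hδ : ∀ x : G, ∀ v ∈ Vx x, δ v = MonoidAlgebra.of k G x ⊗ₜ[k] v) :
    ∀ j : ℕ, j ≤ p - 1 →
      δ ((MonoidAlgebra.of k G (φ 0 * (φ 1)⁻¹) - 1) ^ j • v₀) -
        ∑ i ∈ Finset.range (j + 1),
          ((j.choose i : k) * (1 - ZMod.castHom (dvd_refl p) k α) ^ i) •
            (((MonoidAlgebra.of k G (φ 0 * (φ 1)⁻¹) - 1) ^ i * MonoidAlgebra.of k G (φ 0))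
              ⊗ₜ[k] ((MonoidAlgebra.of k G (φ 0 * (φ 1)⁻¹) - 1) ^ (j - i) • v₀))
      ∈ ⨆ (kl : ℕ × ℕ) (_ : j + 1 ≤ kl.1 + kl.2),
          subTensor13 (idealPow13 J kl.1) (subSMul13 (V := V) (idealPow13 J kl.2)) := by
  haveI : Fact p.Prime := ⟨hp⟩
  haveI : NeZero p := ⟨hp.ne_zero⟩
  clear hXconj hXgen hJmin hφinj hcyc
  -- conjugation by γ on the rack
  have hconj : ∀ i : ZMod p,
      (φ 0 * (φ 1)⁻¹) * φ i * ((φ 0) * (φ 1)⁻¹)⁻¹ = φ (i + (α - 1)) := by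
    intro i
    have hm1 : (1 - α) * 1 + α * (α⁻¹ * (i - (1 - α))) = i := by
      rw [← mul_assoc, mul_inv_cancel₀ hα0]; ring
    have h1 := hrack 1 (α⁻¹ * (i - (1 - α)))
    rw [hm1] at h1
    have h0 := hrack 0 (α⁻¹ * (i - (1 - α)))
    have hm0 : (1 - α) * 0 + α * (α⁻¹ * (i - (1 - α))) = i + (α - 1) := by
      rw [← mul_assoc, mul_inv_cancel₀ hα0]; ring
    rw [hm0] at h0
    rw [← h0, ← h1]
    group
  set γg : G := φ 0 * (φ 1)⁻¹ with hγg
  set c : MonoidAlgebra k G := MonoidAlgebra.of k G γg - 1 with hc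
  set g0 : MonoidAlgebra k G := MonoidAlgebra.of k G (φ 0) with hg0
  set q : k := 1 - ZMod.castHom (dvd_refl p) k α with hq
  have hoinv : ∀ g : G, MonoidAlgebra.of k G g * MonoidAlgebra.of k G g⁻¹ = 1 := by
    intro g; rw [← map_mul, mul_inv_cancel, map_one]
  have hoinv' : ∀ g : G, MonoidAlgebra.of k G g⁻¹ * MonoidAlgebra.of k G g = 1 := by
    intro g; rw [← map_mul, inv_mul_cancel, map_one]
  have hI := aux13_pow_ideal hJ2
  have hcJ : c ∈ J := hJmem
  have hcpow : ∀ n : ℕ, c ^ n ∈ idealPow13 J n := aux13_pow_mem hJ2 hcJ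
  have huc : MonoidAlgebra.of k G γg = 1 + c := by rw [hc]; abel
  -- Step (a): all the γ_i := φ i * (φ (i+1))⁻¹ agree with γ modulo J²
  have horb : ∀ m : ℕ,
      MonoidAlgebra.of k G (φ ((m : ZMod p) * (α - 1)) * (φ ((m : ZMod p) * (α - 1) + 1))⁻¹)
        - MonoidAlgebra.of k G γg ∈ idealPow13 J 2 := by
    intro m
    induction m with
    | zero =>
      have : ((0 : ℕ) : ZMod p) * (α - 1) = 0 := by push_cast; ring
      rw [this, zero_add, ← hγg, sub_self]
      exact Submodule.zero_mem _
    | succ m ih =>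
      have harg : (((m+1 : ℕ)) : ZMod p) * (α - 1) = (m : ZMod p) * (α - 1) + (α - 1) := by
        push_cast; ring
      have e1 : γg * φ ((m : ZMod p) * (α - 1)) * γg⁻¹ = φ ((m : ZMod p) * (α - 1) + (α - 1)) :=
        hconj _
      have e2 : γg * φ ((m : ZMod p) * (α - 1) + 1) * γg⁻¹
          = φ ((m : ZMod p) * (α - 1) + (α - 1) + 1) := by
        have := hconj ((m : ZMod p) * (α - 1) + 1)
        rw [show (m : ZMod p) * (α - 1) + 1 + (α - 1) = (m : ZMod p) * (α - 1) + (α - 1) + 1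
          by ring] at this
        exact this
      have hgrp : φ ((m : ZMod p) * (α - 1) + (α - 1)) * (φ ((m : ZMod p) * (α - 1) + (α - 1) + 1))⁻¹
          = γg * (φ ((m : ZMod p) * (α - 1)) * (φ ((m : ZMod p) * (α - 1) + 1))⁻¹) * γg⁻¹ := by
        rw [← e1, ← e2]; group
      rw [harg, hgrp, map_mul, map_mul]
      have key : MonoidAlgebra.of k G γg
            * MonoidAlgebra.of k G (φ ((m : ZMod p) * (α - 1)) * (φ ((m : ZMod p) * (α - 1) + 1))⁻¹)
            * MonoidAlgebra.of k G γg⁻¹ - MonoidAlgebra.of k G γg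
          = MonoidAlgebra.of k G γg
            * (MonoidAlgebra.of k G (φ ((m : ZMod p) * (α - 1)) * (φ ((m : ZMod p) * (α - 1) + 1))⁻¹)
              - MonoidAlgebra.of k G γg)
            * MonoidAlgebra.of k G γg⁻¹ := by
        have h3 : MonoidAlgebra.of k G γg * MonoidAlgebra.of k G γg * MonoidAlgebra.of k G γg⁻¹
            = MonoidAlgebra.of k G γg := by rw [mul_assoc, hoinv, mul_one]
        calc _ = MonoidAlgebra.of k G γg
              * MonoidAlgebra.of k G (φ ((m : ZMod p) * (α - 1)) * (φ ((m : ZMod p) * (α - 1) + 1))⁻¹)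
              * MonoidAlgebra.of k G γg⁻¹
              - MonoidAlgebra.of k G γg * MonoidAlgebra.of k G γg * MonoidAlgebra.of k G γg⁻¹ := by
                rw [h3]
          _ = _ := by noncomm_ring
      rw [key]
      exact (hI 2 _ ((hI 2 _ ih (MonoidAlgebra.of k G γg)).1) (MonoidAlgebra.of k G γg⁻¹)).2
  have hγi : ∀ i : ZMod p,
      MonoidAlgebra.of k G (φ i * (φ (i + 1))⁻¹) - MonoidAlgebra.of k G γg ∈ idealPow13 J 2 := by
    intro i
    have hsurj : ((i * (α - 1)⁻¹).val : ZMod p) * (α - 1) = i := by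
      rw [ZMod.natCast_val, ZMod.cast_id, mul_assoc,
        inv_mul_cancel₀ (sub_ne_zero_of_ne hα1), mul_one]
    have := horb (i * (α - 1)⁻¹).val
    rwa [hsurj] at this
  -- Step (b): telescoping
  have htel : ∀ n : ℕ, ∀ i : ZMod p,
      MonoidAlgebra.of k G (φ i * (φ (i + (n : ZMod p)))⁻¹) - (MonoidAlgebra.of k G γg) ^ n
        ∈ idealPow13 J 2 := by
    intro n
    induction n with
    | zero =>
      intro i
      simp only [Nat.cast_zero, add_zero, mul_inv_cancel, map_one, pow_zero, sub_self]
      exact Submodule.zero_mem _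
    | succ n ih =>
      intro i
      have hgrp : φ i * (φ (i + ((n+1 : ℕ) : ZMod p)))⁻¹
          = (φ i * (φ (i + (n : ZMod p)))⁻¹)
            * (φ (i + (n : ZMod p)) * (φ (i + (n : ZMod p) + 1))⁻¹) := by
        have : i + ((n+1 : ℕ) : ZMod p) = i + (n : ZMod p) + 1 := by push_cast; ring
        rw [this]; group
      rw [hgrp, map_mul, pow_succ]
      have decomp : ∀ x y X Y : MonoidAlgebra k G,
          x * y - X * Y = (x - X) * y + X * (y - Y) := by
        intro x y X Y; noncomm_ring
      rw [decomp]
      exact Submodule.add_mem _ ((hI 2 _ (ih i) _).2) ((hI 2 _ (hγi (i + (n:ZMod p))) _).1)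
  -- Step (c): geometric expansion of powers of γ
  have hgeom : ∀ n : ℕ,
      (MonoidAlgebra.of k G γg) ^ n - (1 + (n : k) • c) ∈ idealPow13 J 2 := by
    intro n
    match n with
    | 0 =>
      simp only [pow_zero, Nat.cast_zero, zero_smul, add_zero, sub_self]
      exact Submodule.zero_mem _
    | n + 1 =>
      rw [huc, show (1 : MonoidAlgebra k G) + c = c + 1 from add_comm 1 c,
        Commute.add_pow (Commute.one_right c) (n+1)]
      simp only [one_pow, mul_one]
      rw [Finset.sum_range_succ' _ (n+1), Finset.sum_range_succ' _ n]
      simp only [zero_add, pow_zero, one_mul, Nat.choose_zero_right, Nat.cast_one,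
        Nat.choose_one_right, pow_one, mul_one]
      have hsmul : (((n+1:ℕ)) : k) • c = c * (((n+1:ℕ)) : MonoidAlgebra k G) := by
        rw [Algebra.smul_def, map_natCast]
        exact (Nat.cast_commute _ _).eq
      rw [hsmul]
      have hfin : ∀ S T : MonoidAlgebra k G, S + T + 1 - (1 + T) = S := by
        intro S T; abel
      rw [hfin]
      refine Submodule.sum_mem _ ?_
      intro m _
      rw [show m + 1 + 1 = 2 + m by omega, pow_add, mul_assoc]
      exact (hI 2 _ (hcpow 2) _).2
  -- Step (d): the key relation modulo J²
  have hkey : MonoidAlgebra.of k G (φ (α - 1)) - g0 - q • (c * g0) ∈ idealPow13 J 2 := by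
    have h1 : (((1 - α).val : ℕ) : ZMod p) = 1 - α := by rw [ZMod.natCast_val, ZMod.cast_id]
    have h2 : (((1 - α).val : ℕ) : k) = q := by
      have h3 := map_natCast (ZMod.castHom (dvd_refl p) k) (1 - α).val
      rw [h1] at h3
      rw [← h3, map_sub, map_one, hq]
    have ha := htel (1 - α).val (α - 1)
    rw [h1, show α - 1 + (1 - α) = 0 by ring] at ha
    have hb := hgeom (1 - α).val
    rw [h2] at hb
    have hsum := Submodule.add_mem _ ha hb
    rw [sub_add_sub_cancel] at hsum
    have hmul := (hI 2 _ hsum g0).2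
    have hexp : (MonoidAlgebra.of k G (φ (α-1) * (φ 0)⁻¹) - (1 + q • c)) * g0
        = MonoidAlgebra.of k G (φ (α-1)) - g0 - q • (c * g0) := by
      rw [hg0, map_mul, sub_mul, add_mul, one_mul, smul_mul_assoc, mul_assoc, hoinv',
        mul_one, sub_add_eq_sub_sub]
    rwa [hexp] at hmul
  -- The operator Φ satisfying δ (c • v) = Φ (δ v)
  set Φ : MonoidAlgebra k G ⊗[k] V →ₗ[k] MonoidAlgebra k G ⊗[k] V :=
    TensorProduct.map
      ((LinearMap.mulRight k (MonoidAlgebra.of k G γg⁻¹)).comp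
        (LinearMap.mulLeft k (MonoidAlgebra.of k G γg)) - LinearMap.id)
      (actL13 (k := k) (MonoidAlgebra.of k G γg))
    + TensorProduct.map LinearMap.id (actL13 (k := k) c) with hΦdef
  have hΦtmul : ∀ (a : MonoidAlgebra k G) (w : V),
      Φ (a ⊗ₜ[k] w) = ((MonoidAlgebra.of k G γg * a * MonoidAlgebra.of k G γg⁻¹ - a)
          ⊗ₜ[k] (MonoidAlgebra.of k G γg • w)) + (a ⊗ₜ[k] (c • w)) := by
    intro a w
    rw [hΦdef]
    simp only [LinearMap.add_apply, TensorProduct.map_tmul, LinearMap.sub_apply,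
      LinearMap.comp_apply, LinearMap.mulLeft_apply, LinearMap.mulRight_apply,
      LinearMap.id_apply, LinearMap.id_coe, id_eq, actL13_apply]
  have hΦδ : ∀ v : V, δ (c • v) = Φ (δ v) := by
    have hsup : iSup Vx = ⊤ := hgrad.submodule_iSup_eq_top
    intro v
    have hv : v ∈ iSup Vx := hsup ▸ Submodule.mem_top
    refine Submodule.iSup_induction (motive := fun v => δ (c • v) = Φ (δ v)) Vx hv ?_ ?_ ?_
    · intro x w hw
      have h1 : δ w = MonoidAlgebra.of k G x ⊗ₜ[k] w := hδ x w hw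
      have h2 : δ (MonoidAlgebra.of k G γg • w)
          = MonoidAlgebra.of k G (γg * x * γg⁻¹) ⊗ₜ[k] (MonoidAlgebra.of k G γg • w) :=
        hδ _ _ (hcompat γg x w hw)
      have h3 : c • w = MonoidAlgebra.of k G γg • w - w := by rw [hc, sub_smul, one_smul]
      rw [h3, map_sub, h2, h1, hΦtmul, map_mul, map_mul, h3, tmul_sub, sub_tmul]
      abel
    · show δ (c • (0:V)) = Φ (δ 0)
      rw [smul_zero, map_zero, map_zero]
    · intro x y hx hy
      show δ (c • (x + y)) = Φ (δ (x + y))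
      rw [smul_add, map_add, map_add, map_add, hx, hy]
  -- the main induction
  have main : ∀ j : ℕ,
      δ (c ^ j • v₀) - ∑ i ∈ Finset.range (j + 1),
          ((j.choose i : k) * q ^ i) • ((c ^ i * g0) ⊗ₜ[k] (c ^ (j - i) • v₀))
        ∈ M13 J V (j + 1) := by
    intro j
    induction j with
    | zero =>
      have h0 : δ ((c : MonoidAlgebra k G) ^ 0 • v₀) = g0 ⊗ₜ[k] v₀ := by
        rw [pow_zero, one_smul, hδ (φ 0) v₀ hv₀, hg0]
      rw [h0, Finset.sum_range_one]
      simp only [pow_zero, one_mul, Nat.choose_self, Nat.cast_one, Nat.sub_self, one_smul]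
      rw [sub_self]
      exact Submodule.zero_mem _
    | succ j ih =>
      have e0 : j + 1 - j.succ ≤ 0 := by omega
      -- elementary tensor computation
      have hT : ∀ i : ℕ, i ≤ j →
          Φ ((c ^ i * g0) ⊗ₜ[k] (c ^ (j - i) • v₀))
            - (((c ^ i * g0) ⊗ₜ[k] (c ^ (j + 1 - i) • v₀))
              + q • ((c ^ (i+1) * g0) ⊗ₜ[k] (c ^ (j + 1 - (i+1)) • v₀)))
          ∈ M13 J V (j + 1 + 1) := by
        intro i hij
        have e1 : j + 1 - i = (j - i) + 1 := by omega
        have hcm : MonoidAlgebra.of k G γg * c ^ i = c ^ i * MonoidAlgebra.of k G γg :=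
          (((Commute.refl (MonoidAlgebra.of k G γg)).sub_right
            (Commute.one_right _)).pow_right i).eq
        have hconj0 : MonoidAlgebra.of k G γg * g0 * MonoidAlgebra.of k G γg⁻¹
            = MonoidAlgebra.of k G (φ (α - 1)) := by
          rw [hg0, ← map_mul, ← map_mul, hconj 0, zero_add]
        have h1 : MonoidAlgebra.of k G γg * (c ^ i * g0) * MonoidAlgebra.of k G γg⁻¹
            = c ^ i * MonoidAlgebra.of k G (φ (α - 1)) := by
          rw [← mul_assoc (MonoidAlgebra.of k G γg) (c ^ i) g0, hcm,
            mul_assoc (c ^ i) (MonoidAlgebra.of k G γg) g0,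
            mul_assoc (c ^ i) (MonoidAlgebra.of k G γg * g0) (MonoidAlgebra.of k G γg⁻¹),
            hconj0]
        have hL : MonoidAlgebra.of k G γg * (c ^ i * g0) * MonoidAlgebra.of k G γg⁻¹
              - c ^ i * g0
            = q • (c ^ (i+1) * g0)
              + c ^ i * (MonoidAlgebra.of k G (φ (α - 1)) - g0 - q • (c * g0)) := by
          rw [h1]
          have h2 : c ^ i * (MonoidAlgebra.of k G (φ (α - 1)) - g0 - q • (c * g0))
              = c ^ i * MonoidAlgebra.of k G (φ (α - 1)) - c ^ i * g0
                - q • (c ^ (i+1) * g0) := by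
            rw [mul_sub, mul_sub, mul_smul_comm, ← mul_assoc, ← pow_succ]
          rw [h2]; abel
        have hR : MonoidAlgebra.of k G γg • (c ^ (j - i) • v₀)
            = c ^ (j - i) • v₀ + c ^ (j + 1 - i) • v₀ := by
          rw [← mul_smul, huc, add_mul, one_mul, ← pow_succ', ← e1, add_smul]
        have hC : c • (c ^ (j - i) • v₀) = c ^ (j + 1 - i) • v₀ := by
          rw [← mul_smul, ← pow_succ', ← e1]
        have hfinal : Φ ((c ^ i * g0) ⊗ₜ[k] (c ^ (j - i) • v₀))
            - (((c ^ i * g0) ⊗ₜ[k] (c ^ (j + 1 - i) • v₀))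
              + q • ((c ^ (i+1) * g0) ⊗ₜ[k] (c ^ (j + 1 - (i+1)) • v₀)))
            = q • ((c ^ (i+1) * g0) ⊗ₜ[k] (c ^ (j + 1 - i) • v₀))
              + (c ^ i * (MonoidAlgebra.of k G (φ (α - 1)) - g0 - q • (c * g0)))
                ⊗ₜ[k] (c ^ (j - i) • v₀ + c ^ (j + 1 - i) • v₀) := by
          rw [hΦtmul, hL, hC, hR, show j + 1 - (i+1) = j - i from by omega]
          simp only [add_tmul, tmul_add, smul_add, TensorProduct.smul_tmul']
          abel
        rw [hfinal]
        refine Submodule.add_mem _ (Submodule.smul_mem _ q ?_) ?_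
        · exact mem_M13 (by omega) ((hI (i+1) _ (hcpow (i+1)) g0).2)
            (mem_subSMul13 (hcpow (j+1-i)) v₀)
        · rw [tmul_add]
          refine Submodule.add_mem _ ?_ ?_
          · exact mem_M13 (a := i + 2) (b := j - i) (by omega)
              (aux13_mul_mem hJ2 i 2 _ (hcpow i) _ hkey)
              (mem_subSMul13 (hcpow (j - i)) v₀)
          · exact mem_M13 (a := i + 2) (b := j + 1 - i) (by omega)
              (aux13_mul_mem hJ2 i 2 _ (hcpow i) _ hkey)
              (mem_subSMul13 (hcpow (j + 1 - i)) v₀)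
      have hstep : δ (c ^ (j+1) • v₀) = Φ (δ (c ^ j • v₀)) := by
        rw [pow_succ', mul_smul, hΦδ]
      have herr : Φ (δ (c ^ j • v₀) - ∑ i ∈ Finset.range (j + 1),
          ((j.choose i : k) * q ^ i) • ((c ^ i * g0) ⊗ₜ[k] (c ^ (j - i) • v₀)))
          ∈ M13 J V (j + 1 + 1) :=
        M13_map hJ2 (MonoidAlgebra.of k G γg) (MonoidAlgebra.of k G γg⁻¹) (hoinv γg) hcJ Φ
          (fun a w => hΦtmul a w) (j+1) ih
      have hPhiSum : Φ (∑ i ∈ Finset.range (j + 1),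
            ((j.choose i : k) * q ^ i) • ((c ^ i * g0) ⊗ₜ[k] (c ^ (j - i) • v₀)))
          = ∑ i ∈ Finset.range (j + 1), ((j.choose i : k) * q ^ i)
              • Φ ((c ^ i * g0) ⊗ₜ[k] (c ^ (j - i) • v₀)) := by
        rw [map_sum]
        exact Finset.sum_congr rfl fun i _ => map_smul Φ _ _
      have hA : (∑ i ∈ Finset.range (j + 1 + 1),
            ((j.choose i : k) * q ^ i) • ((c ^ i * g0) ⊗ₜ[k] (c ^ (j + 1 - i) • v₀)))
          = ∑ i ∈ Finset.range (j + 1),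
            ((j.choose i : k) * q ^ i) • ((c ^ i * g0) ⊗ₜ[k] (c ^ (j + 1 - i) • v₀)) := by
        rw [Finset.sum_range_succ _ (j+1), Nat.choose_succ_self]
        rw [Nat.cast_zero, zero_mul, zero_smul, add_zero]
      have hB : (∑ i ∈ Finset.range (j + 1 + 1),
            ((if i = 0 then (0:k) else (j.choose (i-1) : k)) * q ^ i)
              • ((c ^ i * g0) ⊗ₜ[k] (c ^ (j + 1 - i) • v₀)))
          = ∑ i ∈ Finset.range (j + 1),
            (((j.choose i : k) * q ^ i) * q)
              • ((c ^ (i+1) * g0) ⊗ₜ[k] (c ^ (j + 1 - (i+1)) • v₀)) := by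
        rw [Finset.sum_range_succ' _ (j+1)]
        simp only [Nat.succ_ne_zero, if_false, Nat.add_sub_cancel, if_pos, pow_zero,
          zero_mul, zero_smul, add_zero, ite_true, ite_false, reduceIte]
        exact Finset.sum_congr rfl fun i _ => by rw [pow_succ, ← mul_assoc]
      have hAB : (∑ i ∈ Finset.range (j + 1 + 1),
            (((j+1).choose i : k) * q ^ i) • ((c ^ i * g0) ⊗ₜ[k] (c ^ (j + 1 - i) • v₀)))
          = (∑ i ∈ Finset.range (j + 1 + 1),
            ((j.choose i : k) * q ^ i) • ((c ^ i * g0) ⊗ₜ[k] (c ^ (j + 1 - i) • v₀)))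
          + (∑ i ∈ Finset.range (j + 1 + 1),
            ((if i = 0 then (0:k) else (j.choose (i-1) : k)) * q ^ i)
              • ((c ^ i * g0) ⊗ₜ[k] (c ^ (j + 1 - i) • v₀))) := by
        rw [← Finset.sum_add_distrib]
        refine Finset.sum_congr rfl fun i _ => ?_
        rw [← add_smul]
        congr 1
        match i with
        | 0 => simp
        | i+1 =>
          simp only [Nat.succ_ne_zero, if_false, Nat.add_sub_cancel, ite_false, reduceIte]
          rw [Nat.choose_succ_succ']
          push_cast
          ring
      rw [hstep, ← sub_add_cancel (δ (c ^ j • v₀)) (∑ i ∈ Finset.range (j + 1),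
          ((j.choose i : k) * q ^ i) • ((c ^ i * g0) ⊗ₜ[k] (c ^ (j - i) • v₀))),
        map_add, hPhiSum, add_sub_assoc]
      refine Submodule.add_mem _ herr ?_
      rw [hAB, hA, hB, ← Finset.sum_add_distrib, ← Finset.sum_sub_distrib]
      refine Submodule.sum_mem _ fun i hi => ?_
      have hij : i ≤ j := by
        have := Finset.mem_range.mp hi; omega
      have hsm : ((j.choose i : k) * q ^ i)
              • Φ ((c ^ i * g0) ⊗ₜ[k] (c ^ (j - i) • v₀))
            - (((j.choose i : k) * q ^ i) • ((c ^ i * g0) ⊗ₜ[k] (c ^ (j + 1 - i) • v₀))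
              + (((j.choose i : k) * q ^ i) * q)
                • ((c ^ (i+1) * g0) ⊗ₜ[k] (c ^ (j + 1 - (i+1)) • v₀)))
          = ((j.choose i : k) * q ^ i)
              • (Φ ((c ^ i * g0) ⊗ₜ[k] (c ^ (j - i) • v₀))
                - (((c ^ i * g0) ⊗ₜ[k] (c ^ (j + 1 - i) • v₀))
                  + q • ((c ^ (i+1) * g0) ⊗ₜ[k] (c ^ (j + 1 - (i+1)) • v₀)))) := by
        rw [smul_sub, smul_add, smul_smul]
      rw [hsm]
      exact Submodule.smul_mem _ _ (hT i hij)
  intro j _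
  exact main j
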